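/- Let Ω ⊆ ℂ be a nonempty open connected set and let {zₙ}ₙ∈ℕ ⊆ Ω be a sequence of distinct points having no limit point in Ω. Then for every sequence of positive integers {mₙ}ₙ∈ℕ and every choice of complex numbers w_{1,n}, …, w_{mₙ,n} ∈ ℂ for each n, there exists an analytic function f on Ω such that f^{(k)}(zₙ) = k!·w_{k,n} for every n ∈ ℕ and every 1 ≤ k ≤ mₙ. -/

import Mathlib

open Pointwise

open Filter Topology Metric Finset

private lemma one_sub_pow_bound : ∀ (M : ℕ) (x : ℂ), ‖x‖ ≤ 1 → ‖1 - (1-x)^M‖ ≤ 2^M * ‖x‖ := by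
  intro M
  induction M with
  | zero => intro x hx; simp [norm_nonneg]
  | succ M ih =>
    intro x hx
    have h1 : (1:ℂ) - (1-x)^(M+1) = (1 - (1-x)^M) + (1-x)^M * x := by ring
    have h2 : ‖(1:ℂ) - x‖ ≤ 2 := by
      calc ‖(1:ℂ) - x‖ ≤ ‖(1:ℂ)‖ + ‖x‖ := norm_sub_le _ _
      _ ≤ 1 + 1 := by rw [norm_one]; exact add_le_add le_rfl hx
      _ = 2 := by norm_num
    have h3 : ‖(1-x)^M‖ ≤ 2^M := by
      rw [norm_pow]; exact pow_le_pow_left₀ (norm_nonneg _) h2 M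
    calc ‖(1:ℂ) - (1-x)^(M+1)‖ ≤ ‖(1:ℂ) - (1-x)^M‖ + ‖(1-x)^M * x‖ := by
          rw [h1]; exact norm_add_le _ _
      _ ≤ 2^M * ‖x‖ + 2^M * ‖x‖ := by
          rw [norm_mul]
          exact add_le_add (ih x hx) (mul_le_mul_of_nonneg_right h3 (norm_nonneg _))
      _ = 2^(M+1) * ‖x‖ := by ring


private lemma analyticAt_deriv {u : ℂ → ℂ} {x : ℂ} (hu : AnalyticAt ℂ u x) :
    AnalyticAt ℂ (deriv u) x := by
  have h1 : ∀ᶠ y in 𝓝 x, AnalyticAt ℂ u y := hu.eventually_analyticAt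
  have h2 : AnalyticOnNhd ℂ u {y | AnalyticAt ℂ u y} := fun y hy => hy
  exact h2.deriv x (by exact hu)

-- Lemma A
private lemma jet_iteratedDeriv (z₀ : ℂ) :
    ∀ (k : ℕ) (M : ℕ), k ≤ M → ∀ (g u : ℂ → ℂ) (c : ℕ → ℂ),
      AnalyticAt ℂ u z₀ →
      (∀ᶠ ζ in 𝓝 z₀, g ζ =
        (∑ i ∈ range (M+1), c i * (ζ - z₀)^i) + (ζ - z₀)^(M+1) * u ζ) →
      iteratedDeriv k g z₀ = (Nat.factorial k : ℂ) * c k := by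
  intro k
  induction k with
  | zero =>
    intro M _ g u c _ hev
    rw [iteratedDeriv_zero, hev.self_of_nhds]
    have : ∀ i ∈ range (M+1), i ≠ 0 → c i * ((z₀ : ℂ) - z₀)^i = 0 := by
      intro i _ hi
      rw [sub_self, zero_pow hi, mul_zero]
    rw [Finset.sum_eq_single_of_mem 0 (by simp) (by intro i h1 h2; exact this i h1 h2)]
    simp
  | succ k ih =>
    intro M hkM g u c hu hev
    obtain ⟨M', rfl⟩ : ∃ M', M = M' + 1 := ⟨M - 1, by omega⟩
    rw [iteratedDeriv_succ']
    -- analytic data for u near z₀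
    have hud : ∀ᶠ ζ in 𝓝 z₀, DifferentiableAt ℂ u ζ :=
      hu.eventually_analyticAt.mono (fun ζ h => h.differentiableAt)
    set U : ℂ → ℂ := fun ζ => ((M' : ℂ) + 2) * u ζ + (ζ - z₀) * deriv u ζ with hU
    have hUan : AnalyticAt ℂ U z₀ := by
      apply AnalyticAt.add
      · exact analyticAt_const.mul hu
      · exact ((analyticAt_id.sub analyticAt_const)).mul (analyticAt_deriv hu)
    have key : iteratedDeriv k (deriv g) z₀ = (Nat.factorial k : ℂ) * (((k:ℂ)+1) * c (k+1)) := by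
      apply ih M' (by omega) (deriv g) U (fun i => ((i : ℂ) + 1) * c (i+1)) hUan
      -- eventual identity for deriv g
      have hev' : ∀ᶠ ζ in 𝓝 z₀, g =ᶠ[𝓝 ζ]
          (fun ζ => (∑ i ∈ range (M'+2), c i * (ζ - z₀)^i) + (ζ - z₀)^(M'+2) * u ζ) :=
        eventually_eventually_nhds.mpr hev
      filter_upwards [hev', hud] with ζ hζ hdu
      rw [hζ.deriv_eq]
      -- compute the derivative of the RHS
      have hd1 : ∀ i : ℕ, HasDerivAt (fun ζ : ℂ => c i * (ζ - z₀)^i)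
          (c i * ((i : ℂ) * (ζ - z₀)^(i-1))) ζ := by
        intro i
        have := (((hasDerivAt_id ζ).sub_const z₀).pow i)
        simpa using (this.const_mul (c i))
      have hsum : HasDerivAt (fun ζ : ℂ => ∑ i ∈ range (M'+2), c i * (ζ - z₀)^i)
          (∑ i ∈ range (M'+2), c i * ((i : ℂ) * (ζ - z₀)^(i-1))) ζ :=
        HasDerivAt.fun_sum (fun i _ => hd1 i)
      have hpow : HasDerivAt (fun ζ : ℂ => (ζ - z₀)^(M'+2)) 
          (((M':ℂ)+2) * (ζ - z₀)^(M'+1)) ζ := by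
        have := ((hasDerivAt_id ζ).sub_const z₀).fun_pow (M'+2)
        simpa [Nat.cast_add, mul_one] using this
      have hprod : HasDerivAt (fun ζ : ℂ => (ζ - z₀)^(M'+2) * u ζ)
          (((M':ℂ)+2) * (ζ - z₀)^(M'+1) * u ζ + (ζ - z₀)^(M'+2) * deriv u ζ) ζ :=
        hpow.mul hdu.hasDerivAt
      have htot := (hsum.fun_add hprod).deriv
      rw [htot]
      -- algebraic rearrangement
      have hre : ∑ i ∈ range (M'+2), c i * ((i : ℂ) * (ζ - z₀)^(i-1))
          = ∑ i ∈ range (M'+1), ((i:ℂ)+1) * c (i+1) * (ζ - z₀)^i := by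
        rw [Finset.sum_range_succ']
        simp only [Nat.cast_zero, zero_mul, mul_zero, add_zero]
        apply Finset.sum_congr rfl
        intro i _
        have : (i + 1) - 1 = i := by omega
        rw [this]
        push_cast
        ring
      rw [hre]
      have : ((M':ℂ)+2) * (ζ - z₀)^(M'+1) * u ζ + (ζ - z₀)^(M'+2) * deriv u ζ
          = (ζ - z₀)^(M'+1) * U ζ := by rw [hU]; ring
      rw [this]

    rw [key]
    rw [Nat.factorial_succ]
    push_cast
    ring


-- atom: splitting off the value
private lemma split_once {v : ℂ → ℂ} {z₀ : ℂ} (hv : AnalyticAt ℂ v z₀) :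
    ∃ v₁ : ℂ → ℂ, AnalyticAt ℂ v₁ z₀ ∧
      ∀ᶠ ζ in 𝓝 z₀, v ζ = v z₀ + (ζ - z₀) * v₁ ζ := by
  set g : ℂ → ℂ := fun ζ => v ζ - v z₀ with hg
  have hga : AnalyticAt ℂ g z₀ := hv.sub analyticAt_const
  by_cases h0 : ∀ᶠ ζ in 𝓝 z₀, g ζ = 0
  · refine ⟨fun _ => 0, analyticAt_const, ?_⟩
    filter_upwards [h0] with ζ hζ
    have : v ζ - v z₀ = 0 := hζ
    rw [mul_zero, add_zero]; exact (sub_eq_zero.mp this)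
  · have hne : analyticOrderAt g z₀ ≠ ⊤ := fun hc => h0 (analyticOrderAt_eq_top.mp hc)
    obtain ⟨n, hn⟩ := WithTop.ne_top_iff_exists.mp hne
    obtain ⟨h, hha, hh0, hhev⟩ := (hga.analyticOrderAt_eq_natCast (n := n)).mp hn.symm
    have hn0 : n ≠ 0 := by
      intro rfl0
      subst rfl0
      have : g z₀ = h z₀ := by
        have := hhev.self_of_nhds
        simpa using this
      apply hh0
      rw [← this, hg]; simp
    obtain ⟨n', rfl⟩ : ∃ n', n = n' + 1 := ⟨n - 1, by omega⟩
    refine ⟨fun ζ => (ζ - z₀)^n' * h ζ, ((analyticAt_id.sub analyticAt_const).pow n').mul hha, ?_⟩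
    filter_upwards [hhev] with ζ hζ
    have : v ζ - v z₀ = (ζ - z₀)^(n'+1) * h ζ := by simpa [hg] using hζ
    have h2 : v ζ = v z₀ + (ζ - z₀)^(n'+1) * h ζ := by
      rw [← this]; ring
    rw [h2]; ring

-- Lemma B : Taylor splitting
private lemma taylor_split {φ : ℂ → ℂ} {z₀ : ℂ} (hφ : AnalyticAt ℂ φ z₀) :
    ∀ M : ℕ, ∃ (c : ℕ → ℂ) (v : ℂ → ℂ), AnalyticAt ℂ v z₀ ∧
      ∀ᶠ ζ in 𝓝 z₀, φ ζ = (∑ i ∈ Finset.range M, c i * (ζ - z₀)^i) + (ζ - z₀)^M * v ζ := by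
  intro M
  induction M with
  | zero =>
    exact ⟨fun _ => 0, φ, hφ, by filter_upwards with ζ; simp⟩
  | succ M ih =>
    obtain ⟨c, v, hv, hev⟩ := ih
    obtain ⟨v₁, hv₁, hev₁⟩ := split_once hv
    refine ⟨fun i => if i = M then v z₀ else c i, v₁, hv₁, ?_⟩
    filter_upwards [hev, hev₁] with ζ h1 h2
    rw [h1, h2, Finset.sum_range_succ]
    have hcong : ∀ i ∈ Finset.range M,
        (if i = M then v z₀ else c i) * (ζ - z₀)^i = c i * (ζ - z₀)^i := by
      intro i hi
      rw [Finset.mem_range] at hi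
      rw [if_neg (by omega)]
    rw [Finset.sum_congr rfl hcong, if_pos rfl]
    ring


-- exhaustion
variable (Ω : Set ℂ)

private noncomputable def exL : ℕ → Set ℂ := fun j =>
  if j = 0 then ∅ else (Metric.closedBall 0 j ∩ {ζ | ∀ w, w ∉ Ω → 1/(j:ℝ) ≤ dist ζ w})

private lemma exL_closed (j : ℕ) : IsClosed (exL Ω j) := by
  unfold exL
  split
  · exact isClosed_empty
  · apply IsClosed.inter Metric.isClosed_closedBall
    have : {ζ : ℂ | ∀ w, w ∉ Ω → 1/(j:ℝ) ≤ dist ζ w}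
        = ⋂ w ∈ {w : ℂ | w ∉ Ω}, {ζ : ℂ | 1/(j:ℝ) ≤ dist ζ w} := by
      ext ζ; simp [Set.mem_iInter]
    rw [this]
    exact isClosed_biInter (fun w _ => isClosed_le continuous_const (continuous_id.dist continuous_const))

private lemma exL_compact (j : ℕ) : IsCompact (exL Ω j) := by
  apply Metric.isCompact_of_isClosed_isBounded (exL_closed Ω j)
  unfold exL
  split
  · exact Bornology.isBounded_empty
  · exact (Metric.isBounded_closedBall).subset Set.inter_subset_left

private lemma exL_subset (hΩ : IsOpen Ω) (j : ℕ) : exL Ω j ⊆ Ω := by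
  unfold exL
  split
  · exact Set.empty_subset _
  · rename_i hj
    intro ζ hζ
    by_contra hζΩ
    have := hζ.2 ζ hζΩ
    simp at this
    have : (0:ℝ) < 1/(j:ℝ) := by
      apply div_pos one_pos
      exact_mod_cast Nat.pos_of_ne_zero hj
    linarith [hζ.2 ζ hζΩ, dist_self ζ]

private lemma exL_mono {j j' : ℕ} (h : j ≤ j') : exL Ω j ⊆ exL Ω j' := by
  unfold exL
  rcases Nat.eq_zero_or_pos j with rfl | hj
  · simp
  have hj' : j' ≠ 0 := by omega
  rw [if_neg (by omega), if_neg hj']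
  intro ζ hζ
  refine ⟨Metric.closedBall_subset_closedBall (by exact_mod_cast h) hζ.1, ?_⟩
  intro w hw
  refine le_trans ?_ (hζ.2 w hw)
  apply div_le_div_of_nonneg_left one_pos.le (by exact_mod_cast hj)
  exact_mod_cast h

private lemma exL_exhausts (hΩ : IsOpen Ω) {K : Set ℂ} (hK : IsCompact K) (hKΩ : K ⊆ Ω) :
    ∃ j : ℕ, K ⊆ exL Ω j := by
  rcases Set.eq_empty_or_nonempty K with rfl | hKne
  · exact ⟨1, Set.empty_subset _⟩
  obtain ⟨R, hR⟩ := hK.isBounded.subset_closedBall 0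
  by_cases hcompl : Ωᶜ = ∅
  · obtain ⟨j, hj⟩ := exists_nat_ge R
    refine ⟨j + 1, fun ζ hζ => ?_⟩
    unfold exL
    rw [if_neg (by omega)]
    refine ⟨Metric.closedBall_subset_closedBall (by push_cast; linarith) (hR hζ), ?_⟩
    intro w hw
    exact absurd (by simpa using hw : w ∈ Ωᶜ) (by rw [hcompl]; exact Set.notMem_empty w)
  · -- compute min of infDist
    have hc : ContinuousOn (fun ζ => Metric.infDist ζ Ωᶜ) K :=
      (Metric.continuous_infDist_pt Ωᶜ).continuousOn
    obtain ⟨ζ₀, hζ₀K, hζ₀⟩ := hK.exists_isMinOn hKne hc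
    have hρ : 0 < Metric.infDist ζ₀ Ωᶜ := by
      rw [← hΩ.isClosed_compl.notMem_iff_infDist_pos (Set.nonempty_iff_ne_empty.mpr hcompl)]
      simpa using hKΩ hζ₀K
    obtain ⟨j, hj⟩ := exists_nat_ge (max R (1 / Metric.infDist ζ₀ Ωᶜ))
    refine ⟨j + 1, fun ζ hζ => ?_⟩
    unfold exL
    rw [if_neg (by omega)]
    constructor
    · apply Metric.closedBall_subset_closedBall _ (hR hζ)
      have := le_trans (le_max_left R _) hj
      push_cast; linarith
    · intro w hw
      have h1 : 1 / ((j:ℝ)+1) ≤ Metric.infDist ζ₀ Ωᶜ := by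
        rw [div_le_iff₀ (by positivity)]
        have h2 := le_trans (le_max_right R _) hj
        rw [div_le_iff₀ hρ] at h2
        nlinarith [hρ]
      rw [show ((((j:ℕ)+1 : ℕ)):ℝ) = (j:ℝ)+1 by push_cast; ring]
      refine le_trans h1 ?_
      refine le_trans (hζ₀ hζ) ?_
      exact Metric.infDist_le_dist_of_mem (by simpa using hw)


private lemma finite_hits {Ω : Set ℂ} {z : ℕ → ℂ}
    (hacc : ∀ p ∈ Ω, ¬ MapClusterPt p Filter.atTop z)
    {K : Set ℂ} (hK : IsCompact K) (hKΩ : K ⊆ Ω) : {n | z n ∈ K}.Finite := by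
  by_contra hinf
  have hinf : {n | z n ∈ K}.Infinite := hinf
  have hfreq : ∃ᶠ n in atTop, n ∈ {n | z n ∈ K} :=
    Nat.frequently_atTop_iff_infinite.mpr hinf
  have hne : NeBot (atTop ⊓ Filter.principal {n | z n ∈ K}) :=
    frequently_mem_iff_neBot.mp hfreq
  have hmap : Filter.map z (atTop ⊓ Filter.principal {n | z n ∈ K}) ≤ Filter.principal K := by
    rw [Filter.map_le_iff_le_comap]
    refine le_trans inf_le_right ?_
    rw [Filter.comap_principal]
    exact Filter.principal_mono.mpr (fun n hn => hn)
  obtain ⟨p, hpK, hp⟩ := hK.exists_mapClusterPt (u := z) hmap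
  exact hacc p (hKΩ hpK) (hp.mono inf_le_left)

private lemma eventually_of_finite_bad {P : ℕ → Prop} {z : ℕ → ℂ} {C : Set ℂ}
    (hfin : {n | z n ∈ C}.Finite) (h : ∀ n, ¬ P n → z n ∈ C) : ∀ᶠ n in atTop, P n := by
  rw [← Nat.cofinite_eq_atTop]
  have : {n | ¬ P n} ⊆ {n | z n ∈ C} := fun n hn => h n hn
  exact (hfin.subset this).eventually_cofinite_notMem.mono (fun n hn => not_not.mp hn)

private lemma exists_Gseq (Ω : Set ℂ) (hΩ : IsOpen Ω) (z : ℕ → ℂ) (hz : ∀ n, z n ∈ Ω)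
    (hacc : ∀ p ∈ Ω, ¬ MapClusterPt p Filter.atTop z) :
    ∃ G g' : ℕ → ℂ → ℂ,
      (∀ n, DifferentiableOn ℂ (G n) Ω) ∧ (∀ n, DifferentiableOn ℂ (g' n) Ω) ∧
      (∀ n, G n (z n) = 1) ∧
      (∀ n, ∀ ζ ∈ Ω, 1 - G n ζ = (ζ - z n) * g' n ζ) ∧
      (∀ K, IsCompact K → K ⊆ Ω → ∀ ε : ℝ, 0 < ε → ∀ᶠ n in atTop, ∀ ζ ∈ K, ‖G n ζ‖ ≤ ε) := by
  by_cases hcne : Ωᶜ = ∅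
  · -- Ω = ℂ
    have hΩuniv : Ω = Set.univ := by
      rw [← Set.compl_empty_iff]; exact hcne
    obtain ⟨b, hb⟩ : ∃ b : ℂ, b ∉ Set.range z := by
      by_contra hall
      push_neg at hall
      have h1 : (Set.univ : Set ℂ).Countable := by
        have : (Set.univ : Set ℂ) ⊆ Set.range z := fun x _ => hall x
        exact (Set.countable_range z).mono this
      have h2 : (Set.univ : Set ℝ).Countable := by
        have hmap : (Set.univ : Set ℝ) ⊆ Complex.re '' Set.univ := by
          intro x _
          exact ⟨(x:ℂ), Set.mem_univ _, by simp⟩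
        exact (h1.image Complex.re).mono hmap
      exact Cardinal.not_countable_real h2
    have hzb : ∀ n, z n - b ≠ 0 := by
      intro n h
      exact hb ⟨n, by linear_combination h⟩
    refine ⟨fun n ζ => (ζ - b)/(z n - b), fun n _ => -(z n - b)⁻¹, ?_, ?_, ?_, ?_, ?_⟩
    · intro n
      exact ((differentiable_id.sub_const b).div_const _).differentiableOn
    · intro n; exact (differentiable_const _).differentiableOn
    · intro n; exact div_self (hzb n)
    · intro n ζ _
      have key : ∀ (a c : ℂ), c ≠ 0 → 1 - a / c = (c - a) / c := by
        intro a c h; field_simp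
      rw [key _ _ (hzb n), div_eq_mul_inv]
      ring
    · intro K hK hKΩ ε hε
      rcases Set.eq_empty_or_nonempty K with rfl | hKne
      · filter_upwards with n ζ hζ using absurd hζ (Set.notMem_empty ζ)
      obtain ⟨R, hR⟩ := hK.isBounded.subset_closedBall 0
      have hCfin : {n | z n ∈ Metric.closedBall 0 (‖b‖ + (R + ‖b‖)/ε)}.Finite := by
        apply finite_hits hacc (isCompact_closedBall _ _)
        rw [hΩuniv]; exact Set.subset_univ _
      apply eventually_of_finite_bad hCfin
      intro n hn
      push_neg at hn
      obtain ⟨ζ, hζK, hζ⟩ := hn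
      have hζR : ‖ζ‖ ≤ R := by simpa using hR hζK
      have hRnn : 0 ≤ R := le_trans (norm_nonneg ζ) hζR
      rw [norm_div] at hζ
      have hzbp : 0 < ‖z n - b‖ := norm_pos_iff.mpr (hzb n)
      have h1 : ε * ‖z n - b‖ < ‖ζ - b‖ := (lt_div_iff₀ hzbp).mp hζ
      have h2 : ‖ζ - b‖ ≤ R + ‖b‖ := le_trans (norm_sub_le _ _) (by linarith)
      have h3 : ‖z n - b‖ ≤ (R + ‖b‖)/ε := by
        rw [le_div_iff₀ hε]; nlinarith
      have h4 : ‖z n‖ ≤ ‖b‖ + (R + ‖b‖)/ε := by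
        calc ‖z n‖ = ‖(z n - b) + b‖ := by ring_nf
          _ ≤ ‖z n - b‖ + ‖b‖ := norm_add_le _ _
          _ ≤ ‖b‖ + (R + ‖b‖)/ε := by linarith
      simpa using h4
  · -- Ω ≠ ℂ
    have hbne : (Ωᶜ : Set ℂ).Nonempty := Set.nonempty_iff_ne_empty.mpr hcne
    have hbne2 := hbne
    obtain ⟨b, hbmem⟩ := hbne2
    have hclosed : IsClosed (Ωᶜ : Set ℂ) := hΩ.isClosed_compl
    have hδpos : ∀ n, 0 < Metric.infDist (z n) Ωᶜ := by
      intro n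
      rw [← hclosed.notMem_iff_infDist_pos hbne]
      simpa using hz n
    have hβex := fun n => hclosed.exists_infDist_eq_dist hbne (z n)
    choose β hβmem hβdist using hβex
    have hzβ : ∀ n, z n - β n ≠ 0 := by
      intro n h
      have h0 : dist (z n) (β n) = 0 := by rw [dist_eq_norm, h, norm_zero]
      rw [← hβdist n] at h0
      exact absurd h0 (ne_of_gt (hδpos n))
    have hzb : ∀ n, z n - b ≠ 0 := by
      intro n h
      have h2 : z n = b := by linear_combination h
      exact hbmem (h2 ▸ hz n)
    refine ⟨fun n => if Metric.infDist (z n) Ωᶜ ≤ 1 then (fun ζ => (z n - β n)/(ζ - β n))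
        else (fun ζ => (ζ - b)/(z n - b)),
      fun n => if Metric.infDist (z n) Ωᶜ ≤ 1 then (fun ζ => (ζ - β n)⁻¹)
        else (fun _ => -(z n - b)⁻¹),
      ?_, ?_, ?_, ?_, ?_⟩
    · intro n
      by_cases hbr : Metric.infDist (z n) Ωᶜ ≤ 1
      · simp only [if_pos hbr]
        apply DifferentiableOn.div (differentiableOn_const _)
          ((differentiable_id.sub_const _).differentiableOn)
        intro ζ hζ h
        have h' : ζ - β n = 0 := by simpa using h
        have h2 : ζ = β n := by linear_combination h'
        rw [h2] at hζ
        exact (hβmem n) hζ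
      · simp only [if_neg hbr]
        exact ((differentiable_id.sub_const b).div_const _).differentiableOn
    · intro n
      by_cases hbr : Metric.infDist (z n) Ωᶜ ≤ 1
      · simp only [if_pos hbr]
        apply DifferentiableOn.inv ((differentiable_id.sub_const _).differentiableOn)
        intro ζ hζ h
        have h' : ζ - β n = 0 := by simpa using h
        have h2 : ζ = β n := by linear_combination h'
        rw [h2] at hζ
        exact (hβmem n) hζ
      · simp only [if_neg hbr]
        exact (differentiable_const _).differentiableOn
    · intro n
      by_cases hbr : Metric.infDist (z n) Ωᶜ ≤ 1
      · simp only [if_pos hbr]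
        exact div_self (hzβ n)
      · simp only [if_neg hbr]
        exact div_self (hzb n)
    · intro n ζ hζ
      have hζβ : ζ - β n ≠ 0 := by
        intro h
        have h2 : ζ = β n := by linear_combination h
        rw [h2] at hζ
        exact (hβmem n) hζ
      have key : ∀ (a c : ℂ), c ≠ 0 → 1 - a / c = (c - a) / c := by
        intro a c h; field_simp
      by_cases hbr : Metric.infDist (z n) Ωᶜ ≤ 1
      · simp only [if_pos hbr]
        rw [key _ _ hζβ, div_eq_mul_inv]
        ring
      · simp only [if_neg hbr]
        rw [key _ _ (hzb n), div_eq_mul_inv]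
        ring
    · intro K hK hKΩ ε hε
      rcases Set.eq_empty_or_nonempty K with rfl | hKne
      · filter_upwards with n ζ hζ using absurd hζ (Set.notMem_empty ζ)
      obtain ⟨R, hR⟩ := hK.isBounded.subset_closedBall 0
      have hRnn : 0 ≤ R := by
        obtain ⟨ζ, hζ⟩ := hKne
        exact le_trans (norm_nonneg ζ) (by simpa using hR hζ)
      have hc : ContinuousOn (fun ζ : ℂ => Metric.infDist ζ Ωᶜ) K :=
        (Metric.continuous_infDist_pt (Ωᶜ : Set ℂ)).continuousOn
      obtain ⟨ζ₀, hζ₀K, hζ₀⟩ := hK.exists_isMinOn hKne hc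
      have hρpos : 0 < Metric.infDist ζ₀ Ωᶜ := by
        rw [← hclosed.notMem_iff_infDist_pos hbne]
        simpa using hKΩ hζ₀K
      set ρ : ℝ := Metric.infDist ζ₀ Ωᶜ with hρdef
      have hCc : IsCompact ((Metric.closedBall (0:ℂ) (R + 1/ε + 1) ∩ {ζ | ε * ρ ≤ Metric.infDist ζ Ωᶜ})
          ∪ (Metric.closedBall 0 (‖b‖ + (R + ‖b‖)/ε) ∩ {ζ | 1 ≤ Metric.infDist ζ Ωᶜ})) := by
        have hCcl : ∀ (r c : ℝ),
            IsCompact (Metric.closedBall (0:ℂ) r ∩ {ζ | c ≤ Metric.infDist ζ Ωᶜ}) := by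
          intro r c
          apply Metric.isCompact_of_isClosed_isBounded
          · exact Metric.isClosed_closedBall.inter
              (isClosed_le continuous_const (Metric.continuous_infDist_pt _))
          · exact (Metric.isBounded_closedBall).subset Set.inter_subset_left
        exact (hCcl _ _).union (hCcl _ _)
      have hCΩ : ((Metric.closedBall (0:ℂ) (R + 1/ε + 1) ∩ {ζ | ε * ρ ≤ Metric.infDist ζ Ωᶜ})
          ∪ (Metric.closedBall 0 (‖b‖ + (R + ‖b‖)/ε) ∩ {ζ | 1 ≤ Metric.infDist ζ Ωᶜ})) ⊆ Ω := by
        rintro ζ (⟨_, h2⟩ | ⟨_, h2⟩) <;> simp only [Set.mem_setOf_eq] at h2 <;> by_contra hx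
        · have h0 : Metric.infDist ζ Ωᶜ = 0 := Metric.infDist_zero_of_mem (by simpa using hx)
          rw [h0] at h2
          nlinarith
        · have h0 : Metric.infDist ζ Ωᶜ = 0 := Metric.infDist_zero_of_mem (by simpa using hx)
          rw [h0] at h2
          linarith
      apply eventually_of_finite_bad (finite_hits hacc hCc hCΩ)
      intro n hn
      push_neg at hn
      obtain ⟨ζ, hζK, hζ⟩ := hn
      have hζR : ‖ζ‖ ≤ R := by simpa using hR hζK
      have hζρ : ρ ≤ Metric.infDist ζ Ωᶜ := hζ₀ hζK
      have hζβn : ρ ≤ dist ζ (β n) :=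
        le_trans hζρ (Metric.infDist_le_dist_of_mem (hβmem n))
      by_cases hbr : Metric.infDist (z n) Ωᶜ ≤ 1
      · -- branch A
        rw [if_pos hbr] at hζ
        have hdpos : 0 < dist ζ (β n) := lt_of_lt_of_le hρpos hζβn
        have hnorm : ‖(z n - β n)/(ζ - β n)‖ = dist (z n) (β n) / dist ζ (β n) := by
          rw [norm_div, dist_eq_norm, dist_eq_norm]
        rw [hnorm] at hζ
        have h1 : ε * dist ζ (β n) < dist (z n) (β n) := (lt_div_iff₀ hdpos).mp hζ
        have h2 : ε * ρ ≤ Metric.infDist (z n) Ωᶜ := by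
          rw [hβdist n]; nlinarith
        have h3 : dist ζ (β n) < 1/ε := by
          rw [lt_div_iff₀ hε]
          have := hβdist n
          nlinarith [hbr, h1]
        have h4 : ‖z n‖ ≤ R + 1/ε + 1 := by
          have e2 : dist ζ (z n) ≤ dist ζ (β n) + dist (β n) (z n) := dist_triangle _ _ _
          have e3 : dist (β n) (z n) ≤ 1 := by
            rw [dist_comm, ← hβdist n]; exact hbr
          have e1 : ‖z n‖ ≤ ‖ζ‖ + dist ζ (z n) := by
            rw [dist_eq_norm]
            calc ‖z n‖ = ‖ζ - (ζ - z n)‖ := by ring_nf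
              _ ≤ ‖ζ‖ + ‖ζ - z n‖ := norm_sub_le _ _
          linarith
        left
        exact ⟨by simpa using h4, h2⟩
      · -- branch B
        rw [if_neg hbr] at hζ
        push_neg at hbr
        have hzbp : 0 < ‖z n - b‖ := norm_pos_iff.mpr (hzb n)
        rw [norm_div] at hζ
        have h1 : ε * ‖z n - b‖ < ‖ζ - b‖ := (lt_div_iff₀ hzbp).mp hζ
        have h2 : ‖ζ - b‖ ≤ R + ‖b‖ := le_trans (norm_sub_le _ _) (by linarith)
        have h3 : ‖z n‖ ≤ ‖b‖ + (R + ‖b‖)/ε := by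
          have h5 : ‖z n - b‖ ≤ (R + ‖b‖)/ε := by
            rw [le_div_iff₀ hε]; nlinarith
          calc ‖z n‖ = ‖(z n - b) + b‖ := by ring_nf
            _ ≤ ‖z n - b‖ + ‖b‖ := norm_add_le _ _
            _ ≤ ‖b‖ + (R + ‖b‖)/ε := by linarith
        right
        exact ⟨by simpa using h3, le_of_lt hbr⟩


private lemma differentiable_prodf (z : ℕ → ℂ) (m : ℕ → ℕ) (s : Finset ℕ) :
    Differentiable ℂ (fun ζ : ℂ => ∏ j ∈ s, (ζ - z j)^(m j + 1)) := by
  classical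
  induction s using Finset.induction with
  | empty => simpa using differentiable_const (1:ℂ)
  | insert a s' hj ih =>
    have : (fun ζ : ℂ => ∏ j ∈ insert a s', (ζ - z j)^(m j + 1))
        = fun ζ : ℂ => (ζ - z a)^(m a + 1) * ∏ j ∈ s', (ζ - z j)^(m j + 1) := by
      funext ζ
      exact Finset.prod_insert hj
    rw [this]
    exact ((differentiable_id.sub_const _).pow _).mul ih

private lemma exists_step
    (Ω : Set ℂ) (hΩ : IsOpen Ω) (z : ℕ → ℂ) (hz : ∀ n, z n ∈ Ω) (hinj : Function.Injective z)
    (m : ℕ → ℕ) (w : ℕ → ℕ → ℂ) (G g' : ℕ → ℂ → ℂ)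
    (hGdiff : ∀ n, DifferentiableOn ℂ (G n) Ω) (hg'diff : ∀ n, DifferentiableOn ℂ (g' n) Ω)
    (hGfac : ∀ n, ∀ ζ ∈ Ω, 1 - G n ζ = (ζ - z n) * g' n ζ)
    (n : ℕ) (σ : ℂ → ℂ) (hσ : DifferentiableOn ℂ σ Ω) :
    ∃ F : ℂ → ℂ, DifferentiableOn ℂ F Ω ∧
      (∀ j : ℕ, j ≤ n → (∀ ζ ∈ exL Ω j, ‖G n ζ‖ ≤ 1/2) → ∀ ζ ∈ exL Ω j, ‖F ζ‖ ≤ (1/2)^n) ∧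
      (∀ j, j < n → ∃ h : ℂ → ℂ, DifferentiableOn ℂ h Ω ∧
          ∀ ζ, F ζ = (ζ - z j)^(m j + 1) * h ζ) ∧
      (∃ u : ℂ → ℂ, AnalyticAt ℂ u (z n) ∧ ∀ᶠ ζ in 𝓝 (z n),
          σ ζ + F ζ - (∑ i ∈ Finset.range (m n + 1), (if i = 0 then (0:ℂ) else w n i) * (ζ - z n)^i)
            = (ζ - z n)^(m n + 1) * u ζ) := by
  classical
  set M : ℕ := m n + 1 with hM
  set H : ℂ → ℂ := fun ζ => ∏ j ∈ Finset.range n, (ζ - z j)^(m j + 1) with hH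
  have hHdiff : Differentiable ℂ H := differentiable_prodf z m _
  have hHne : H (z n) ≠ 0 := by
    rw [hH]
    simp only []
    apply Finset.prod_ne_zero_iff.mpr
    intro j hj
    apply pow_ne_zero
    intro hc
    have : z n = z j := by linear_combination hc
    have : n = j := hinj this
    rw [Finset.mem_range] at hj
    omega
  set q : ℂ → ℂ := fun ζ => ∑ i ∈ Finset.range M, (if i = 0 then (0:ℂ) else w n i) * (ζ - z n)^i
    with hq
  have hqdiff : Differentiable ℂ q := by
    apply Differentiable.fun_sum
    intro i _
    exact ((differentiable_id.sub_const _).pow _).const_mul _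
  have hφan : AnalyticAt ℂ (fun ζ => (q ζ - σ ζ) / H ζ) (z n) := by
    apply AnalyticAt.div
    · exact (hqdiff.analyticAt _).sub (hσ.analyticAt (hΩ.mem_nhds (hz n)))
    · exact hHdiff.analyticAt _
    · exact hHne
  obtain ⟨c, v, hvan, hvev⟩ := taylor_split hφan M
  set Rf : ℂ → ℂ := fun ζ => ∑ i ∈ Finset.range M, c i * (ζ - z n)^i with hRf
  have hRfdiff : Differentiable ℂ Rf := by
    apply Differentiable.fun_sum
    intro i _
    exact ((differentiable_id.sub_const _).pow _).const_mul _
  -- choose the compact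
  set P : ℕ → Prop := fun j => ∀ ζ ∈ exL Ω j, ‖G n ζ‖ ≤ 1/2 with hP
  set ψ : ℕ := Nat.findGreatest P n with hψ
  have hP0 : P 0 := by
    intro ζ hζ
    simp [exL] at hζ
  have hPψ : P ψ := Nat.findGreatest_spec (Nat.zero_le n) hP0
  obtain ⟨S, hS⟩ := (exL_compact Ω ψ).exists_bound_of_continuousOn
    ((hRfdiff.mul hHdiff).continuous.continuousOn (s := exL Ω ψ))
  have hSnn : ∀ ζ ∈ exL Ω ψ, ‖Rf ζ * H ζ‖ ≤ max S 0 :=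
    fun ζ hζ => le_trans (hS ζ hζ) (le_max_left _ _)
  set S' : ℝ := max S 0 with hS'
  have hS'nn : 0 ≤ S' := le_max_right _ _
  -- choose N
  have hεpos : 0 < ((1:ℝ)/2)^n / ((S' + 1) * 2^M) := by positivity
  obtain ⟨N, hN⟩ := exists_pow_lt_of_lt_one hεpos (by norm_num : (1:ℝ)/2 < 1)
  set Θ : ℂ → ℂ := fun ζ => 1 - (1 - (G n ζ)^N)^M with hΘ
  have hΘdiff : DifferentiableOn ℂ Θ Ω := by
    apply DifferentiableOn.const_sub
    exact (DifferentiableOn.const_sub ((hGdiff n).pow N) 1).pow M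
  refine ⟨fun ζ => Rf ζ * H ζ * Θ ζ, ?_, ?_, ?_, ?_⟩
  · exact ((hRfdiff.mul hHdiff).differentiableOn).mul hΘdiff
  · -- smallness
    intro j hj hPj ζ hζ
    have hjψ : j ≤ ψ := Nat.le_findGreatest hj hPj
    have hζψ : ζ ∈ exL Ω ψ := exL_mono Ω hjψ hζ
    have hGb : ‖G n ζ‖ ≤ 1/2 := hPψ ζ hζψ
    have hGNb : ‖(G n ζ)^N‖ ≤ (1/2:ℝ)^N := by
      rw [norm_pow]
      exact pow_le_pow_left₀ (norm_nonneg _) hGb N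
    have hGN1 : ‖(G n ζ)^N‖ ≤ 1 := le_trans hGNb (by
      apply pow_le_one₀ <;> norm_num)
    have hΘb : ‖Θ ζ‖ ≤ 2^M * (1/2:ℝ)^N := by
      refine le_trans (one_sub_pow_bound M _ hGN1) ?_
      have := hGNb
      gcongr
    calc ‖Rf ζ * H ζ * Θ ζ‖ = ‖Rf ζ * H ζ‖ * ‖Θ ζ‖ := norm_mul _ _
      _ ≤ S' * (2^M * (1/2:ℝ)^N) :=
          mul_le_mul (hSnn ζ hζψ) hΘb (norm_nonneg _) hS'nn
      _ ≤ (S' + 1) * 2^M * (1/2:ℝ)^N := by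
          have hx : (0:ℝ) ≤ 2^M * (1/2:ℝ)^N := by positivity
          nlinarith [hx]
      _ ≤ (1/2:ℝ)^n := by
          have hB : (0:ℝ) < (S'+1) * 2^M := by positivity
          have h2 := (lt_div_iff₀ hB).mp hN
          nlinarith [h2]
  · -- vanishing at earlier points
    intro j hjn
    refine ⟨fun ζ => Rf ζ * ((∏ i ∈ (Finset.range n).erase j, (ζ - z i)^(m i + 1)) * Θ ζ),
      ?_, ?_⟩
    · exact (hRfdiff.differentiableOn).mul
        (((differentiable_prodf z m _).differentiableOn).mul hΘdiff)
    · intro ζ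
      have hmem : j ∈ Finset.range n := Finset.mem_range.mpr hjn
      have hfac : H ζ = (ζ - z j)^(m j + 1) * ∏ i ∈ (Finset.range n).erase j, (ζ - z i)^(m i + 1) :=
        (Finset.mul_prod_erase _ _ hmem).symm
      show Rf ζ * H ζ * Θ ζ = _
      rw [hfac]
      ring
  · -- jet property
    refine ⟨fun ζ => -(H ζ * v ζ) - Rf ζ * H ζ * ((g' n ζ * (∑ i ∈ Finset.range N, (G n ζ)^i))^M),
      ?_, ?_⟩
    · apply AnalyticAt.sub
      · exact (((hHdiff.analyticAt _).mul hvan)).neg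
      · apply AnalyticAt.mul
        · exact (hRfdiff.analyticAt _).mul (hHdiff.analyticAt _)
        · apply AnalyticAt.pow
          apply AnalyticAt.mul
          · exact (hg'diff n).analyticAt (hΩ.mem_nhds (hz n))
          · apply Finset.analyticAt_fun_sum
            intro i _
            exact ((hGdiff n).analyticAt (hΩ.mem_nhds (hz n))).pow i
    · have hΩev : ∀ᶠ ζ in 𝓝 (z n), ζ ∈ Ω := hΩ.eventually_mem (hz n)
      have hHev : ∀ᶠ ζ in 𝓝 (z n), H ζ ≠ 0 :=
        hHdiff.continuous.continuousAt.eventually_ne hHne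
      filter_upwards [hΩev, hHev, hvev] with ζ hζΩ hζH hζv
      have e1 : q ζ - σ ζ = H ζ * (Rf ζ + (ζ - z n)^M * v ζ) := by
        rw [← hζv]
        field_simp
      have g1 : (1:ℂ) - (G n ζ)^N = (ζ - z n) * (g' n ζ * ∑ i ∈ Finset.range N, (G n ζ)^i) := by
        have hgf := hGfac n ζ hζΩ
        have hgeom := geom_sum_mul (G n ζ) N
        linear_combination (∑ i ∈ Finset.range N, (G n ζ)^i) * hgf + hgeom
      have e2 : Θ ζ = 1 - (ζ - z n)^M * ((g' n ζ * (∑ i ∈ Finset.range N, (G n ζ)^i))^M) := by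
        show 1 - ((1:ℂ) - (G n ζ)^N)^M = _
        rw [g1, mul_pow]
      linear_combination (Rf ζ * H ζ) * e2 - e1


-- iterated derivative differentiability

private lemma iter_diffOn {Ω : Set ℂ} (hΩ : IsOpen Ω) {g : ℂ → ℂ}
    (hg : DifferentiableOn ℂ g Ω) : ∀ k, DifferentiableOn ℂ (iteratedDeriv k g) Ω := by
  intro k
  induction k with
  | zero => simpa using hg
  | succ k ih =>
    rw [iteratedDeriv_succ]
    exact ((ih.analyticOnNhd hΩ).deriv).differentiableOn

-- locally uniform convergence of iterated derivatives
private lemma tlu_iteratedDeriv {Ω : Set ℂ} (hΩ : IsOpen Ω) {S : ℕ → ℂ → ℂ} {f : ℂ → ℂ}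
    (hS : ∀ N, DifferentiableOn ℂ (S N) Ω)
    (h : TendstoLocallyUniformlyOn S f atTop Ω) :
    ∀ k, TendstoLocallyUniformlyOn (fun N => iteratedDeriv k (S N)) (iteratedDeriv k f) atTop Ω := by
  intro k
  induction k with
  | zero => simpa using h
  | succ k ih =>
    have hd : ∀ᶠ N in atTop, DifferentiableOn ℂ (iteratedDeriv k (S N)) Ω :=
      Eventually.of_forall (fun N => iter_diffOn hΩ (hS N) k)
    have := ih.deriv hd hΩ
    simp only [iteratedDeriv_succ]
    exact this.congr_right (fun ζ _ => rfl) |>.congr (fun N => by intro ζ _; rfl)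

-- F sequence by recursion
private lemma exists_Fseq
    (Ω : Set ℂ) (hΩ : IsOpen Ω) (z : ℕ → ℂ) (hz : ∀ n, z n ∈ Ω) (hinj : Function.Injective z)
    (m : ℕ → ℕ) (w : ℕ → ℕ → ℂ) (G g' : ℕ → ℂ → ℂ)
    (hGdiff : ∀ n, DifferentiableOn ℂ (G n) Ω) (hg'diff : ∀ n, DifferentiableOn ℂ (g' n) Ω)
    (hGfac : ∀ n, ∀ ζ ∈ Ω, 1 - G n ζ = (ζ - z n) * g' n ζ) :
    ∃ F : ℕ → ℂ → ℂ, (∀ n, DifferentiableOn ℂ (F n) Ω) ∧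
      (∀ n j, j ≤ n → (∀ ζ ∈ exL Ω j, ‖G n ζ‖ ≤ 1/2) → ∀ ζ ∈ exL Ω j, ‖F n ζ‖ ≤ (1/2:ℝ)^n) ∧
      (∀ n j, j < n → ∃ h : ℂ → ℂ, DifferentiableOn ℂ h Ω ∧
          ∀ ζ, F n ζ = (ζ - z j)^(m j + 1) * h ζ) ∧
      (∀ n, ∃ u : ℂ → ℂ, AnalyticAt ℂ u (z n) ∧ ∀ᶠ ζ in 𝓝 (z n),
          (∑ i ∈ Finset.range (n+1), F i ζ)
            - (∑ i ∈ Finset.range (m n + 1), (if i = 0 then (0:ℂ) else w n i) * (ζ - z n)^i)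
            = (ζ - z n)^(m n + 1) * u ζ) := by
  classical
  have step := fun (n : ℕ) (σ : ℂ → ℂ) (hσ : DifferentiableOn ℂ σ Ω) =>
    exists_step Ω hΩ z hz hinj m w G g' hGdiff hg'diff hGfac n σ hσ
  let σs : ℕ → {g : ℂ → ℂ // DifferentiableOn ℂ g Ω} :=
    fun n => Nat.rec ⟨fun _ => 0, differentiableOn_const 0⟩
      (fun k p => ⟨fun ζ => p.1 ζ + (step k p.1 p.2).choose ζ,
        p.2.add (step k p.1 p.2).choose_spec.1⟩) n
  let F : ℕ → ℂ → ℂ := fun n => (step n (σs n).1 (σs n).2).choose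
  have hσsucc : ∀ n, (σs (n+1)).1 = fun ζ => (σs n).1 ζ + F n ζ := fun n => rfl
  have hσsum : ∀ n, (σs n).1 = fun ζ => ∑ i ∈ Finset.range n, F i ζ := by
    intro n
    induction n with
    | zero =>
      funext ζ
      show (0:ℂ) = _
      simp
    | succ k ih =>
      funext ζ
      rw [hσsucc k]
      simp only []
      rw [Finset.sum_range_succ, congrFun ih ζ]
  refine ⟨F, ?_, ?_, ?_, ?_⟩
  · intro n; exact (step n (σs n).1 (σs n).2).choose_spec.1
  · intro n; exact (step n (σs n).1 (σs n).2).choose_spec.2.1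
  · intro n; exact (step n (σs n).1 (σs n).2).choose_spec.2.2.1
  · intro n
    obtain ⟨u, hu, hev⟩ := (step n (σs n).1 (σs n).2).choose_spec.2.2.2
    refine ⟨u, hu, ?_⟩
    filter_upwards [hev] with ζ h
    rw [Finset.sum_range_succ, ← congrFun (hσsum n) ζ]
    exact h

/-- Interpolation theorem for analytic functions (Rudin 15.13): let `Ω ⊆ ℂ` be a nonempty
open connected set and `{zₙ}` a sequence of distinct points of `Ω` with no limit point in
`Ω`. Then for every sequence of positive integers `{mₙ}` and every choice of complex numbers
`w_{k,n}` (`1 ≤ k ≤ mₙ`) there is an analytic function `f` on `Ω` with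
`f^{(k)}(zₙ) = k!·w_{k,n}` for all `n` and `1 ≤ k ≤ mₙ`. -/
theorem analytic_interpolation (Ω : Set ℂ) (hΩ : IsOpen Ω) (hne : Ω.Nonempty)
    (hconn : IsConnected Ω) (z : ℕ → ℂ) (hz : ∀ n, z n ∈ Ω) (hinj : Function.Injective z)
    (hacc : ∀ p ∈ Ω, ¬ MapClusterPt p Filter.atTop z)
    (m : ℕ → ℕ) (hm : ∀ n, 0 < m n) (w : ℕ → ℕ → ℂ) :
    ∃ f : ℂ → ℂ, DifferentiableOn ℂ f Ω ∧
      ∀ n : ℕ, ∀ k : ℕ, 1 ≤ k → k ≤ m n →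
        iteratedDeriv k f (z n) = (Nat.factorial k : ℂ) * w n k := by
  classical
  obtain ⟨G, g', hGdiff, hg'diff, hG1, hGfac, hGsmall⟩ := exists_Gseq Ω hΩ z hz hacc
  obtain ⟨F, hFdiff, hFsmall, hFvan, hFjet⟩ :=
    exists_Fseq Ω hΩ z hz hinj m w G g' hGdiff hg'diff hGfac
  choose hv hvdiff hveq using hFvan
  choose hu huan huev using hFjet
  set f : ℂ → ℂ := fun ζ => ∑' n, F n ζ with hf_def
  set S : ℕ → ℂ → ℂ := fun N ζ => ∑ n ∈ Finset.range N, F n ζ with hS_def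
  have hSdiff : ∀ N, DifferentiableOn ℂ (S N) Ω := by
    intro N
    exact DifferentiableOn.fun_sum (fun i _ => hFdiff i)
  have hsum : Summable (fun n : ℕ => ((1:ℝ)/2)^n) :=
    summable_geometric_of_lt_one (by norm_num) (by norm_num)
  have hTLU : TendstoLocallyUniformlyOn S f atTop Ω := by
    rw [tendstoLocallyUniformlyOn_iff_forall_isCompact hΩ]
    intro K hKΩ hK
    obtain ⟨j₀, hj₀⟩ := exL_exhausts Ω hΩ hK hKΩ
    have hbound : ∀ᶠ n in cofinite, ∀ ζ ∈ K, ‖F n ζ‖ ≤ ((1:ℝ)/2)^n := by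
      rw [Nat.cofinite_eq_atTop]
      have h1 := hGsmall (exL Ω j₀) (exL_compact Ω j₀) (exL_subset Ω hΩ j₀) (1/2) (by norm_num)
      filter_upwards [h1, eventually_ge_atTop j₀] with n hGn hjn ζ hζ
      exact hFsmall n j₀ hjn hGn ζ (hj₀ hζ)
    intro v hv
    exact tendsto_finset_range.eventually
      (tendstoUniformlyOn_tsum_of_cofinite_eventually hsum hbound v hv)
  have hfdiffΩ : DifferentiableOn ℂ f Ω :=
    hTLU.differentiableOn (Eventually.of_forall hSdiff) hΩ
  refine ⟨f, hfdiffΩ, ?_⟩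
  intro j k hk1 hk2
  -- convergence of iterated derivatives at z j
  have hKd := tlu_iteratedDeriv hΩ hSdiff hTLU k
  have hat : Tendsto (fun N => iteratedDeriv k (S N) (z j)) atTop
      (𝓝 (iteratedDeriv k f (z j))) := hKd.tendsto_at (hz j)
  -- eventual constancy
  have hconst : ∀ᶠ N in atTop, iteratedDeriv k (S N) (z j)
      = (Nat.factorial k : ℂ) * w j k := by
    filter_upwards [eventually_ge_atTop (j+1)] with N hN
    -- decomposition of S N near z j
    set V : ℕ → ℂ → ℂ := fun i => if h : j < i then hv i j h else 0 with hV
    set U : ℂ → ℂ := fun ζ => hu j ζ + ∑ i ∈ Finset.Ico (j+1) N, V i ζ with hU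
    have hUan : AnalyticAt ℂ U (z j) := by
      apply AnalyticAt.add (huan j)
      apply Finset.analyticAt_fun_sum
      intro i hi
      have hji : j < i := by
        rw [Finset.mem_Ico] at hi; omega
      rw [hV]
      simp only [dif_pos hji]
      exact (hvdiff i j hji).analyticAt (hΩ.mem_nhds (hz j))
    have hev : ∀ᶠ ζ in 𝓝 (z j), S N ζ =
        (∑ i ∈ Finset.range (m j + 1), (if i = 0 then (0:ℂ) else w j i) * (ζ - z j)^i)
          + (ζ - z j)^(m j + 1) * U ζ := by
      filter_upwards [huev j] with ζ hζ
      have hsplit : S N ζ = (∑ i ∈ Finset.range (j+1), F i ζ) + ∑ i ∈ Finset.Ico (j+1) N, F i ζ := by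
        rw [hS_def]
        simp only []
        rw [Finset.range_eq_Ico, ← Finset.sum_Ico_consecutive _ (Nat.zero_le (j+1)) hN,
          ← Finset.range_eq_Ico]
      have htail : ∑ i ∈ Finset.Ico (j+1) N, F i ζ
          = (ζ - z j)^(m j + 1) * ∑ i ∈ Finset.Ico (j+1) N, V i ζ := by
        rw [Finset.mul_sum]
        apply Finset.sum_congr rfl
        intro i hi
        have hji : j < i := by
          rw [Finset.mem_Ico] at hi; omega
        rw [hV]
        simp only [dif_pos hji]
        exact hveq i j hji ζ
      rw [hsplit, htail, hU]
      simp only []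
      linear_combination hζ
    have hjd := jet_iteratedDeriv (z j) k (m j) hk2 (S N) U
      (fun i => if i = 0 then (0:ℂ) else w j i) hUan hev
    rw [hjd]
    have hk0 : k ≠ 0 := by omega
    simp [hk0]
  have hconst' : (fun N => iteratedDeriv k (S N) (z j))
      =ᶠ[atTop] (fun _ => (Nat.factorial k : ℂ) * w j k) := hconst
  have hb : Tendsto (fun N => iteratedDeriv k (S N) (z j)) atTop
      (𝓝 ((Nat.factorial k : ℂ) * w j k)) :=
    Filter.Tendsto.congr' hconst'.symm tendsto_const_nhds
  exact tendsto_nhds_unique hat hb
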